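/- Base case of the periodic fermionic sum (s = 1): For positive integers l, m and a nonnegative integer p, the sum of q^{x_1 + ... + x_m} over all integer tuples satisfying 0 ≤ x_1 ≤ ... ≤ x_m ≤ p + min(x_1, l−1) equals ([p + m·l]_q / [m]_q) · [p+m−1 choose m−1]_q, where [n]_q = (1−q^n)/(1−q). -/

import Mathlib

open Finset

noncomputable def q : RatFunc ℚ := RatFunc.X

noncomputable def qInt (n : ℕ) : RatFunc ℚ := ∑ i ∈ Finset.range n, q ^ i

noncomputable def qPoch (n : ℕ) : RatFunc ℚ := ∏ i ∈ Finset.range n, (1 - q ^ (i + 1))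

noncomputable def qb (n m : ℕ) : RatFunc ℚ := qPoch n / (qPoch m * qPoch (n - m))

lemma q_pow_ne_one {k : ℕ} (hk : 0 < k) : q ^ k ≠ 1 := by
  intro h
  have : (Polynomial.X : Polynomial ℚ) ^ k = 1 := by
    apply IsFractionRing.injective (Polynomial ℚ) (RatFunc ℚ)
    rw [map_pow, map_one, RatFunc.algebraMap_X]
    exact h
  have := congrArg (Polynomial.eval 0) this
  simp [Polynomial.eval_pow, zero_pow hk.ne'] at this

lemma one_sub_q_pow_ne_zero {k : ℕ} (hk : 0 < k) : (1 : RatFunc ℚ) - q ^ k ≠ 0 := by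
  intro h
  exact q_pow_ne_one hk (by linear_combination -h)

lemma qPoch_ne_zero (n : ℕ) : qPoch n ≠ 0 := by
  unfold qPoch
  exact Finset.prod_ne_zero_iff.mpr fun i _ =>
    sub_ne_zero.mpr fun h => q_pow_ne_one (Nat.succ_pos i) h.symm

lemma qPoch_succ (n : ℕ) : qPoch (n + 1) = qPoch n * (1 - q ^ (n + 1)) := by
  unfold qPoch; rw [Finset.prod_range_succ]

lemma qInt_mul (n : ℕ) : qInt n * (1 - q) = 1 - q ^ n := by
  have := geom_sum_mul q n
  unfold qInt
  linear_combination -this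

lemma one_sub_q_ne_zero : (1 : RatFunc ℚ) - q ≠ 0 := by
  simpa using one_sub_q_pow_ne_zero (k := 1) one_pos

lemma qInt_eq (n : ℕ) : qInt n = (1 - q ^ n) / (1 - q) := by
  rw [eq_div_iff one_sub_q_ne_zero, qInt_mul]

lemma qInt_ne_zero {n : ℕ} (hn : 0 < n) : qInt n ≠ 0 := by
  intro h
  have := qInt_mul n
  rw [h, zero_mul] at this
  exact one_sub_q_pow_ne_zero hn (by linear_combination -this)

lemma qb_zero (n : ℕ) : qb n 0 = 1 := by
  unfold qb
  have h0 : qPoch 0 = 1 := by simp [qPoch]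
  rw [h0, one_mul, Nat.sub_zero, div_self (qPoch_ne_zero n)]

lemma qb_self (n : ℕ) : qb n n = 1 := by
  unfold qb
  simp only [Nat.sub_self]
  have : qPoch 0 = 1 := by simp [qPoch]
  rw [this, mul_one, div_self (qPoch_ne_zero n)]

noncomputable def T (N m : ℕ) : RatFunc ℚ :=
  ∑ x ∈ (Finset.univ : Finset (Fin m → Fin (N+1))).filter (fun x => Monotone x),
    q ^ (∑ i, (x i : ℕ))

lemma T_zero_right (N : ℕ) : T N 0 = 1 := by
  unfold T
  have h : ∀ x ∈ (Finset.univ : Finset (Fin 0 → Fin (N+1))), Monotone x :=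
    fun x _ => fun a _ _ => a.elim0
  rw [Finset.filter_true_of_mem h]
  simp

lemma T_zero_left (m : ℕ) : T 0 m = 1 := by
  unfold T
  have h : ∀ x ∈ (Finset.univ : Finset (Fin m → Fin 1)), Monotone x :=
    fun x _ => fun a b _ => le_of_eq (Subsingleton.elim _ _)
  rw [Finset.filter_true_of_mem h]
  have h1 : ∀ x : Fin m → Fin 1, (∑ i, ((x i : ℕ))) = 0 := by
    intro x; apply Finset.sum_eq_zero; intro i _; exact Fin.val_eq_zero _
  rw [Finset.sum_congr rfl (fun x _ => by rw [h1 x, pow_zero])]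
  simp

lemma T_succ (N m : ℕ) : T (N+1) (m+1) = T N (m+1) + q^(N+1) * T (N+1) m := by
  unfold T
  rw [← Finset.sum_filter_add_sum_filter_not
     ((univ : Finset (Fin (m+1) → Fin (N+2))).filter (fun x => Monotone x))
     (fun x => (x (Fin.last m)).val ≤ N)]
  congr 1
  · rw [Finset.filter_filter]
    refine Finset.sum_nbij'
      (i := fun x => fun k => (⟨min (x k).val N, by omega⟩ : Fin (N+1)))
      (j := fun y => fun k => (y k).castSucc) ?_ ?_ ?_ ?_ ?_
    · intro x hx
      simp only [Finset.mem_filter, Finset.mem_univ, true_and] at hx ⊢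
      intro a b hab
      exact Fin.mk_le_mk.mpr (min_le_min (hx.1 hab) le_rfl)
    · intro y hy
      simp only [Finset.mem_filter, Finset.mem_univ, true_and] at hy ⊢
      refine ⟨fun a b hab => ?_, ?_⟩
      · exact Fin.castSucc_le_castSucc_iff.mpr (hy hab)
      · simpa using Nat.lt_succ_iff.mp (y (Fin.last m)).isLt
    · intro x hx
      simp only [Finset.mem_filter, Finset.mem_univ, true_and] at hx
      funext k
      ext
      simp only [Fin.coe_castSucc]
      exact min_eq_left (le_trans (Fin.le_def.mp (hx.1 (Fin.le_last k))) hx.2)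
    · intro y hy
      funext k; ext
      simp only [Fin.coe_castSucc]
      exact min_eq_left (Nat.lt_succ_iff.mp (y k).isLt)
    · intro x hx
      simp only [Finset.mem_filter, Finset.mem_univ, true_and] at hx
      congr 1
      refine Finset.sum_congr rfl fun k _ => ?_
      exact (min_eq_left (le_trans (Fin.le_def.mp (hx.1 (Fin.le_last k))) hx.2)).symm
  · rw [Finset.filter_filter, Finset.mul_sum]
    refine Finset.sum_nbij'
      (i := fun x => x ∘ Fin.castSucc)
      (j := fun y => Fin.snoc y (Fin.last (N+1))) ?_ ?_ ?_ ?_ ?_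
    · intro x hx
      simp only [Finset.mem_filter, Finset.mem_univ, true_and] at hx ⊢
      exact fun a b hab => hx.1 (Fin.castSucc_le_castSucc_iff.mpr hab)
    · intro y hy
      simp only [Finset.mem_filter, Finset.mem_univ, true_and] at hy ⊢
      constructor
      · intro a b hab
        rcases Fin.eq_castSucc_or_eq_last b with ⟨b', rfl⟩ | rfl
        · rcases Fin.eq_castSucc_or_eq_last a with ⟨a', rfl⟩ | rfl
          · rw [Fin.snoc_castSucc, Fin.snoc_castSucc]
            exact hy (Fin.castSucc_le_castSucc_iff.mp hab)
          · have : b'.castSucc = Fin.last m :=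
              le_antisymm (Fin.le_last _) hab
            rw [this, Fin.snoc_last]
        · rw [Fin.snoc_last]
          rcases Fin.eq_castSucc_or_eq_last a with ⟨a', rfl⟩ | rfl
          · rw [Fin.snoc_castSucc]; exact Fin.le_last _
          · rw [Fin.snoc_last]
      · simp [Fin.snoc_last]
    · intro x hx
      simp only [Finset.mem_filter, Finset.mem_univ, true_and] at hx
      funext k
      rcases Fin.eq_castSucc_or_eq_last k with ⟨k', rfl⟩ | rfl
      · simp only [Fin.snoc_castSucc, Function.comp_apply]
      · simp only [Fin.snoc_last]
        ext
        simp only [Fin.val_last]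
        have := (x (Fin.last m)).isLt
        omega
    · intro y hy
      funext k
      simp only [Function.comp_apply, Fin.snoc_castSucc]
    · intro x hx
      simp only [Finset.mem_filter, Finset.mem_univ, true_and] at hx
      rw [← pow_add]
      congr 1
      rw [Fin.sum_univ_castSucc]
      have hlast : (x (Fin.last m)).val = N + 1 := by
        have := (x (Fin.last m)).isLt; omega
      rw [hlast]
      simp only [Function.comp_apply]
      ring

lemma qb_pascal (N m : ℕ) :
    qb (N+1+(m+1)) (m+1) = qb (N+(m+1)) (m+1) + q^(N+1) * qb (N+1+m) m := by
  unfold qb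
  have e1 : N+1+(m+1) - (m+1) = N+1 := by omega
  have e2 : N+(m+1) - (m+1) = N := by omega
  have e3 : N+1+m - m = N+1 := by omega
  rw [e1, e2, e3]
  have h1 : N+1+(m+1) = (N+(m+1)) + 1 := by omega
  have h1' : N+1+m = (N+m)+1 := by omega
  rw [h1, h1', qPoch_succ (N+(m+1)), qPoch_succ m, qPoch_succ N]
  have hpow : q^(N+(m+1)+1) = q^(N+1) * q^(m+1) := by rw [← pow_add]; congr 1; omega
  rw [hpow]
  have hm1 := one_sub_q_pow_ne_zero (Nat.succ_pos m)
  have hN1 := one_sub_q_pow_ne_zero (Nat.succ_pos N)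
  field_simp [qPoch_ne_zero, hm1, hN1]
  ring

lemma T_eq_qb : ∀ m N, T N m = qb (N + m) m := by
  intro m
  induction m with
  | zero => intro N; rw [T_zero_right, Nat.add_zero, qb_zero]
  | succ m ih =>
    intro N
    induction N with
    | zero =>
      rw [T_zero_left, Nat.zero_add, qb_self]
    | succ N ihN =>
      rw [T_succ, ihN, ih (N+1)]
      exact (qb_pascal N m).symm

lemma final_algebra (p m' l' : ℕ) :
    q^((m'+1)*l') * qb (p+(m'+1)) (m'+1) + (∑ j ∈ Finset.range l', (q^(m'+1))^j) * qb (p+m') m'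
    = qInt (p + (m'+1)*(l'+1)) / qInt (m'+1) * qb (p+m') m' := by
  have h1 : (1:RatFunc ℚ) - q^(m'+1) ≠ 0 := one_sub_q_pow_ne_zero (Nat.succ_pos m')
  have hrel : qb (p+(m'+1)) (m'+1) = qb (p+m') m' * (1 - q^(p+m'+1)) / (1 - q^(m'+1)) := by
    unfold qb
    have e1 : p+(m'+1) - (m'+1) = p := by omega
    have e2 : p+m' - m' = p := by omega
    rw [e1, e2, show p+(m'+1) = (p+m')+1 from by omega, qPoch_succ (p+m'), qPoch_succ m']
    field_simp [qPoch_ne_zero, h1]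
  rw [hrel]
  have hgeom : (∑ j ∈ Finset.range l', (q^(m'+1))^j) = (1 - (q^(m'+1))^l') / (1 - q^(m'+1)) := by
    rw [eq_div_iff h1]
    linear_combination - geom_sum_mul (q^(m'+1)) l'
  rw [hgeom, qInt_eq, qInt_eq]
  have hN : q ^ (p + (m'+1)*(l'+1)) = (q^(m'+1))^l' * q^(p+m'+1) := by
    rw [← pow_mul, ← pow_add]; congr 1; ring
  rw [hN]
  have h2 := one_sub_q_ne_zero
  have hml : q^((m'+1)*l') = (q^(m'+1))^l' := by rw [← pow_mul]
  rw [hml]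
  have hq : qInt (m'+1) ≠ 0 := qInt_ne_zero (Nat.succ_pos m')
  field_simp
  ring

theorem stmt7 (l m p : ℕ) (hl : 0 < l) (hm : 0 < m) :
    ∑ x ∈ (Finset.univ : Finset (Fin m → Fin (p + l))).filter
        (fun x => Monotone x ∧
          (x ⟨m - 1, by omega⟩).val ≤ p + min (x ⟨0, hm⟩).val (l - 1)),
      q ^ (∑ i : Fin m, (x i : ℕ)) =
    qInt (p + m * l) / qInt m * qb (p + m - 1) (m - 1) := by
  cases l with
  | zero => omega
  | succ l' =>
  cases m with
  | zero => omega
  | succ m' =>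
  simp only [show ∀ h, (⟨m'+1-1, h⟩ : Fin (m'+1)) = Fin.last m' from fun _ => rfl,
    show (⟨0, hm⟩ : Fin (m'+1)) = 0 from rfl,
    show l'+1-1 = l' from rfl]
  rw [← Finset.sum_filter_add_sum_filter_not
      ((Finset.univ : Finset (Fin (m'+1) → Fin (p + (l'+1)))).filter
        (fun x => Monotone x ∧ (x (Fin.last m')).val ≤ p + min (x 0).val l'))
      (fun x => l' ≤ (x 0).val), Finset.filter_filter, Finset.filter_filter]
  have hA : ∑ x ∈ (Finset.univ : Finset (Fin (m'+1) → Fin (p + (l'+1)))).filter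
      (fun x => (Monotone x ∧ (x (Fin.last m')).val ≤ p + min (x 0).val l') ∧ l' ≤ (x 0).val),
      q ^ (∑ i : Fin (m'+1), (x i : ℕ)) = q^((m'+1)*l') * T p (m'+1) := by
    unfold T
    rw [Finset.mul_sum]
    refine Finset.sum_nbij'
      (i := fun x => fun k => (⟨(x k).val - l', by have := (x k).isLt; omega⟩ : Fin (p+1)))
      (j := fun y => fun k => (⟨(y k).val + l', by have := (y k).isLt; omega⟩ : Fin (p+(l'+1))))
      ?_ ?_ ?_ ?_ ?_
    · intro x hx
      simp only [Finset.mem_filter, Finset.mem_univ, true_and] at hx ⊢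
      intro a b hab
      exact Fin.mk_le_mk.mpr (Nat.sub_le_sub_right (Fin.le_def.mp (hx.1.1 hab)) l')
    · intro y hy
      simp only [Finset.mem_filter, Finset.mem_univ, true_and] at hy ⊢
      refine ⟨⟨fun a b hab => Fin.mk_le_mk.mpr (Nat.add_le_add_right (Fin.le_def.mp (hy hab)) l'), ?_⟩, ?_⟩
      · show (y (Fin.last m')).val + l' ≤ p + min ((y 0).val + l') l'
        have h1 := (y (Fin.last m')).isLt
        omega
      · show l' ≤ (y 0).val + l'
        omega
    · intro x hx
      simp only [Finset.mem_filter, Finset.mem_univ, true_and] at hx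
      funext k
      ext
      simp only
      have h0k : l' ≤ (x k).val := le_trans hx.2 (Fin.le_def.mp (hx.1.1 (Fin.zero_le k)))
      omega
    · intro y hy
      funext k
      ext
      simp only
      omega
    · intro x hx
      simp only [Finset.mem_filter, Finset.mem_univ, true_and] at hx
      rw [← pow_add]
      congr 1
      have h0k : ∀ k, l' ≤ (x k).val :=
        fun k => le_trans hx.2 (Fin.le_def.mp (hx.1.1 (Fin.zero_le k)))
      have : ∀ k : Fin (m'+1), (x k).val = ((x k).val - l') + l' := fun k => by
        have := h0k k; omega
      rw [Finset.sum_congr rfl (fun k _ => this k), Finset.sum_add_distrib]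
      simp only [Finset.sum_const, Finset.card_univ, Fintype.card_fin, smul_eq_mul]
      ring
  have hB : ∑ x ∈ (Finset.univ : Finset (Fin (m'+1) → Fin (p + (l'+1)))).filter
      (fun x => (Monotone x ∧ (x (Fin.last m')).val ≤ p + min (x 0).val l') ∧ ¬ l' ≤ (x 0).val),
      q ^ (∑ i : Fin (m'+1), (x i : ℕ)) = (∑ j ∈ Finset.range l', (q^(m'+1))^j) * T p m' := by
    rw [Finset.sum_mul, ← Finset.sum_fiberwise_of_maps_to
      (g := fun x => (x 0).val) (t := Finset.range l')
      (fun x hx => by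
        simp only [Finset.mem_filter] at hx
        simp only [Finset.mem_range]
        omega)]
    refine Finset.sum_congr rfl fun j hj => ?_
    rw [Finset.filter_filter]
    simp only [Finset.mem_range] at hj
    unfold T
    rw [Finset.mul_sum]
    refine Finset.sum_bij'
      (i := fun x hx => fun k => (⟨(x k.succ).val - j, ?_⟩ : Fin (p+1)))
      (j := fun z hz => Fin.cons (⟨j, by omega⟩ : Fin (p+(l'+1)))
        (fun k => (⟨(z k).val + j, by have := (z k).isLt; omega⟩ : Fin (p+(l'+1)))))
      ?_ ?_ ?_ ?_ ?_
    · -- bound for i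
      simp only [Finset.mem_filter, Finset.mem_univ, true_and] at hx
      obtain ⟨⟨⟨hmono, hcond⟩, hlt⟩, h0⟩ := hx
      have hk : (x k.succ).val ≤ (x (Fin.last m')).val :=
        Fin.le_def.mp (hmono (Fin.le_last _))
      have : min (x 0).val l' = j := by omega
      omega
    · intro x hx
      simp only [Finset.mem_filter, Finset.mem_univ, true_and]
      simp only [Finset.mem_filter, Finset.mem_univ, true_and] at hx
      obtain ⟨⟨⟨hmono, hcond⟩, hlt⟩, h0⟩ := hx
      intro a b hab
      exact Fin.mk_le_mk.mpr (Nat.sub_le_sub_right (Fin.le_def.mp (hmono (Fin.succ_le_succ_iff.mpr hab))) j)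
    · intro z hz
      simp only [Finset.mem_filter, Finset.mem_univ, true_and] at hz ⊢
      have hmono : Monotone (Fin.cons (⟨j, by omega⟩ : Fin (p+(l'+1)))
          (fun k => (⟨(z k).val + j, by have := (z k).isLt; omega⟩ : Fin (p+(l'+1))))) := by
        intro a b hab
        induction a using Fin.cases with
        | zero =>
          induction b using Fin.cases with
          | zero => exact le_rfl
          | succ b' =>
            simp only [Fin.cons_zero, Fin.cons_succ]
            exact Fin.mk_le_mk.mpr (by omega)
        | succ a' =>
          induction b using Fin.cases with
          | zero => exact absurd hab (by simp [Fin.le_def, Fin.succ])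
          | succ b' =>
            simp only [Fin.cons_succ]
            have : a' ≤ b' := Fin.succ_le_succ_iff.mp hab
            exact Fin.mk_le_mk.mpr (Nat.add_le_add_right (Fin.le_def.mp (hz this)) j)
      have hbd : ∀ b : Fin (m'+1), (((Fin.cons (⟨j, by omega⟩ : Fin (p+(l'+1)))
          (fun k => (⟨(z k).val + j, by have := (z k).isLt; omega⟩ : Fin (p+(l'+1))))) : Fin (m'+1) → Fin (p+(l'+1))) b).val ≤ p + j := by
        intro b
        induction b using Fin.cases with
        | zero => simp only [Fin.cons_zero]; omega
        | succ b' =>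
          simp only [Fin.cons_succ]
          have := (z b').isLt
          omega
      refine ⟨⟨⟨hmono, ?_⟩, ?_⟩, ?_⟩
      · have h1 := hbd (Fin.last m')
        simp only [Fin.cons_zero, Fin.val_mk] at h1 ⊢
        omega
      · simp only [Fin.cons_zero, Fin.val_mk]; omega
      · simp only [Fin.cons_zero, Fin.val_mk]
    · -- left_inv
      intro x hx
      simp only [Finset.mem_filter, Finset.mem_univ, true_and] at hx
      obtain ⟨⟨⟨hmono, hcond⟩, hlt⟩, h0⟩ := hx
      funext k
      induction k using Fin.cases with
      | zero =>
        simp only [Fin.cons_zero]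
        ext
        exact h0.symm
      | succ k' =>
        simp only [Fin.cons_succ]
        ext
        simp only
        have : j ≤ (x k'.succ).val := h0 ▸ Fin.le_def.mp (hmono (Fin.zero_le _))
        omega
    · -- right_inv
      intro z hz
      funext k
      ext
      simp only [Fin.cons_succ]
      omega
    · -- sums agree
      intro x hx
      simp only [Finset.mem_filter, Finset.mem_univ, true_and] at hx
      obtain ⟨⟨⟨hmono, hcond⟩, hlt⟩, h0⟩ := hx
      rw [← pow_mul, ← pow_add]
      congr 1
      dsimp only
      have hvk : ∀ k : Fin m', j ≤ (x k.succ).val :=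
        fun k => h0 ▸ Fin.le_def.mp (hmono (Fin.zero_le _))
      rw [Fin.sum_univ_succ,
        Finset.sum_congr rfl (fun k (_ : k ∈ (Finset.univ : Finset (Fin m'))) =>
          show (x k.succ).val = ((x k.succ).val - j) + j from by have := hvk k; omega),
        Finset.sum_add_distrib]
      simp only [Finset.sum_const, Finset.card_univ, Fintype.card_fin, smul_eq_mul]
      rw [h0]
      ring
  rw [hA, hB, T_eq_qb, T_eq_qb, final_algebra]
  rfl
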